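/- Let β ∈ (0,1), let C₂, C₃, C₄ ≥ 0 be constants, and let {u_k} and {α_k} be sequences of non-negative reals with lim_{k→∞} α_k = 0, ∑_{k} α_k² < ∞, and u_{k+1} ≤ C₂ β^{k−1} + C₃ ∑_{l=1}^{k−1} β^{k−1−l} α_l + C₄ α_k for all k ≥ 1. Then lim_{k→∞} u_k = 0 and ∑_{k} α_k u_k < ∞. -/

import Mathlib

open Filter Finset

private lemma geo_bound {β : ℝ} (h0 : 0 ≤ β) (h1 : β < 1) (a k : ℕ) :
    ∑ l ∈ Finset.Ico a k, β ^ (k - 1 - l) ≤ 1 / (1 - β) := by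
  have hinj : ∀ x ∈ Finset.Ico a k, ∀ y ∈ Finset.Ico a k,
      k - 1 - x = k - 1 - y → x = y := by
    intro x hx y hy h
    simp only [Finset.mem_Ico] at hx hy
    omega
  have himg : ∑ l ∈ Finset.Ico a k, β ^ (k - 1 - l)
      = ∑ j ∈ (Finset.Ico a k).image (fun l => k - 1 - l), β ^ j :=
    (Finset.sum_image hinj).symm
  have hsub : (Finset.Ico a k).image (fun l => k - 1 - l) ⊆ Finset.range k := by
    intro j hj
    simp only [Finset.mem_image, Finset.mem_Ico] at hj
    obtain ⟨l, ⟨hl1, hl2⟩, rfl⟩ := hj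
    simp only [Finset.mem_range]
    omega
  have h2 : ∑ j ∈ (Finset.Ico a k).image (fun l => k - 1 - l), β ^ j
      ≤ ∑ j ∈ Finset.range k, β ^ j :=
    Finset.sum_le_sum_of_subset_of_nonneg hsub (fun j _ _ => pow_nonneg h0 j)
  have h3 : ∑ j ∈ Finset.range k, β ^ j ≤ 1 / (1 - β) := by
    have hβ1 : (0:ℝ) < 1 - β := by linarith
    rw [le_div_iff₀ hβ1]
    have := geom_sum_mul β k
    have hk : (0:ℝ) ≤ β ^ k := pow_nonneg h0 k
    nlinarith
  calc ∑ l ∈ Finset.Ico a k, β ^ (k - 1 - l)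
      = ∑ j ∈ (Finset.Ico a k).image (fun l => k - 1 - l), β ^ j := himg
    _ ≤ ∑ j ∈ Finset.range k, β ^ j := h2
    _ ≤ 1 / (1 - β) := h3

private lemma conv_tendsto {β : ℝ} (h0 : 0 < β) (h1 : β < 1) (α : ℕ → ℝ)
    (hα : ∀ k, 0 ≤ α k) (hlim : Filter.Tendsto α Filter.atTop (nhds 0)) :
    Filter.Tendsto (fun k => ∑ l ∈ Finset.Ico 1 k, β ^ (k - 1 - l) * α l)
      Filter.atTop (nhds 0) := by
  rw [Metric.tendsto_atTop]
  intro ε hε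
  have hβ1 : (0:ℝ) < 1 - β := by linarith
  set ε' : ℝ := ε * (1 - β) / 4 with hε'def
  have hε' : 0 < ε' := by positivity
  obtain ⟨N0, hN0⟩ := (Metric.tendsto_atTop.mp hlim) ε' hε'
  set N : ℕ := max N0 1 with hNdef
  have hNsmall : ∀ l, N ≤ l → α l ≤ ε' := by
    intro l hl
    have := hN0 l (le_trans (le_max_left _ _) hl)
    rw [Real.dist_eq, sub_zero, abs_of_nonneg (hα l)] at this
    exact this.le
  set S : ℝ := ∑ l ∈ Finset.Ico 1 N, α l with hSdef
  have hS : 0 ≤ S := Finset.sum_nonneg fun l _ => hα l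
  have hgeo : Filter.Tendsto (fun k : ℕ => β ^ k * S) Filter.atTop (nhds 0) := by
    simpa using (tendsto_pow_atTop_nhds_zero_of_lt_one h0.le h1).mul_const S
  obtain ⟨K, hK⟩ := (Metric.tendsto_atTop.mp hgeo) (ε / 2) (by positivity)
  refine ⟨K + N + 1, fun k hk => ?_⟩
  have hNk : N ≤ k := by omega
  have hconv_nonneg : 0 ≤ ∑ l ∈ Finset.Ico 1 k, β ^ (k - 1 - l) * α l :=
    Finset.sum_nonneg fun l _ => mul_nonneg (pow_nonneg h0.le _) (hα l)
  rw [Real.dist_eq, sub_zero, abs_of_nonneg hconv_nonneg]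
  have hsplit : Finset.Ico 1 k = Finset.Ico 1 N ∪ Finset.Ico N k := by
    rw [Finset.Ico_union_Ico_eq_Ico (by omega : 1 ≤ N) hNk]
  have hdisj : Disjoint (Finset.Ico 1 N) (Finset.Ico N k) := by
    apply Finset.disjoint_left.mpr
    intro x hx hx'
    simp only [Finset.mem_Ico] at hx hx'
    omega
  rw [hsplit, Finset.sum_union hdisj]
  -- first part
  have hpart1 : ∑ l ∈ Finset.Ico 1 N, β ^ (k - 1 - l) * α l ≤ β ^ (k - N) * S := by
    rw [hSdef, Finset.mul_sum]
    apply Finset.sum_le_sum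
    intro l hl
    simp only [Finset.mem_Ico] at hl
    apply mul_le_mul_of_nonneg_right _ (hα l)
    exact pow_le_pow_of_le_one h0.le h1.le (by omega)
  have hpart1' : β ^ (k - N) * S < ε / 2 := by
    have := hK (k - N) (by omega)
    rw [Real.dist_eq, sub_zero] at this
    calc β ^ (k - N) * S ≤ |β ^ (k - N) * S| := le_abs_self _
      _ < ε / 2 := this
  -- second part
  have hpart2 : ∑ l ∈ Finset.Ico N k, β ^ (k - 1 - l) * α l ≤ ε' * (1 / (1 - β)) := by
    calc ∑ l ∈ Finset.Ico N k, β ^ (k - 1 - l) * α l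
        ≤ ∑ l ∈ Finset.Ico N k, β ^ (k - 1 - l) * ε' := by
          apply Finset.sum_le_sum
          intro l hl
          simp only [Finset.mem_Ico] at hl
          exact mul_le_mul_of_nonneg_left (hNsmall l hl.1) (pow_nonneg h0.le _)
      _ = (∑ l ∈ Finset.Ico N k, β ^ (k - 1 - l)) * ε' := by rw [Finset.sum_mul]
      _ ≤ (1 / (1 - β)) * ε' := mul_le_mul_of_nonneg_right (geo_bound h0.le h1 N k) hε'.le
      _ = ε' * (1 / (1 - β)) := by ring
  have : ε' * (1 / (1 - β)) = ε / 4 := by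
    rw [hε'def]; field_simp
  linarith

/-- Let β ∈ (0,1), C₂, C₃, C₄ ≥ 0, and {u_k}, {α_k} non-negative with
α_k → 0, ∑ α_k² < ∞ and u_{k+1} ≤ C₂ β^{k−1} + C₃ ∑_{l=1}^{k−1} β^{k−1−l} α_l + C₄ α_k
for all k ≥ 1. Then u_k → 0 and ∑ α_k u_k < ∞. -/
theorem stmt11 (β C₂ C₃ C₄ : ℝ) (hβ : β ∈ Set.Ioo (0 : ℝ) 1)
    (hC₂ : 0 ≤ C₂) (hC₃ : 0 ≤ C₃) (hC₄ : 0 ≤ C₄)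
    (u α : ℕ → ℝ) (hu : ∀ k, 0 ≤ u k) (hα : ∀ k, 0 ≤ α k)
    (hαlim : Filter.Tendsto α Filter.atTop (nhds 0))
    (hαsq : Summable (fun k => (α k) ^ 2))
    (hrec : ∀ k, 1 ≤ k →
      u (k + 1) ≤ C₂ * β ^ (k - 1) + C₃ * ∑ l ∈ Finset.Ico 1 k, β ^ (k - 1 - l) * α l
          + C₄ * α k) :
    Filter.Tendsto u Filter.atTop (nhds 0) ∧ Summable (fun k => α k * u k) := by
  obtain ⟨hβ0, hβ1⟩ := hβ
  have hβ1' : (0:ℝ) < 1 - β := by linarith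
  set v : ℕ → ℝ := fun k =>
    C₂ * β ^ (k - 1) + C₃ * ∑ l ∈ Finset.Ico 1 k, β ^ (k - 1 - l) * α l + C₄ * α k
    with hvdef
  have hvlim : Filter.Tendsto v Filter.atTop (nhds 0) := by
    have h1 : Filter.Tendsto (fun k : ℕ => C₂ * β ^ (k - 1)) Filter.atTop (nhds 0) := by
      have := ((tendsto_pow_atTop_nhds_zero_of_lt_one hβ0.le hβ1).comp
        (tendsto_sub_atTop_nat 1)).const_mul C₂
      simpa using this
    have h2 : Filter.Tendsto
        (fun k : ℕ => C₃ * ∑ l ∈ Finset.Ico 1 k, β ^ (k - 1 - l) * α l)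
        Filter.atTop (nhds 0) := by
      have := (conv_tendsto hβ0 hβ1 α hα hαlim).const_mul C₃
      simpa using this
    have h3 : Filter.Tendsto (fun k : ℕ => C₄ * α k) Filter.atTop (nhds 0) := by
      simpa using hαlim.const_mul C₄
    have := (h1.add h2).add h3
    simpa using this
  constructor
  · -- limit of u
    apply squeeze_zero' (Filter.Eventually.of_forall hu)
      (g := fun k => v (k - 1))
    · filter_upwards [Filter.eventually_ge_atTop 2] with k hk
      have h1 : 1 ≤ k - 1 := by omega
      have h2 : k - 1 + 1 = k := by omega
      have := hrec (k - 1) h1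
      rw [h2] at this
      exact this
    · exact hvlim.comp (tendsto_sub_atTop_nat 1)
  · -- summability
    rw [← summable_nat_add_iff 2]
    -- majorant pieces
    have hsum1 : Summable (fun k : ℕ => α (k + 2) ^ 2) :=
      (summable_nat_add_iff (f := fun k => (α k)^2) 2).mpr hαsq
    have hsum1' : Summable (fun k : ℕ => α (k + 1) ^ 2) :=
      (summable_nat_add_iff (f := fun k => (α k)^2) 1).mpr hαsq
    have hsum2 : Summable (fun k : ℕ => (β ^ 2) ^ k) :=
      summable_geometric_of_lt_one (by positivity) (by nlinarith)
    have hsum3 : Summable (fun k : ℕ => ∑ l ∈ Finset.range (k + 1),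
        (α l) ^ 2 * β ^ (k - l)) := by
      have hf : Summable fun x : ℕ => ‖(α x) ^ 2‖ := by
        simpa only [Real.norm_eq_abs, abs_of_nonneg (sq_nonneg _ : (0:ℝ) ≤ _ ^ 2)] using hαsq
      have hg : Summable fun x : ℕ => ‖β ^ x‖ := by
        simpa only [Real.norm_eq_abs, abs_of_nonneg (pow_nonneg hβ0.le _ : (0:ℝ) ≤ _)] using
          summable_geometric_of_lt_one hβ0.le hβ1
      exact (summable_norm_sum_mul_range_of_summable_norm hf hg).of_norm
    -- the majorant
    set M : ℕ → ℝ := fun k =>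
      C₂ * ((α (k + 2) ^ 2 + (β ^ 2) ^ k) / 2)
      + C₃ * (α (k + 2) ^ 2 / 2 * (1 / (1 - β))
          + (1 / 2) * ∑ l ∈ Finset.range (k + 1), (α l) ^ 2 * β ^ (k - l))
      + C₄ * ((α (k + 2) ^ 2 + α (k + 1) ^ 2) / 2) with hMdef
    have hMsum : Summable M := by
      apply Summable.add
      apply Summable.add
      · exact ((hsum1.add hsum2).div_const 2).mul_left C₂
      · exact ((((hsum1.div_const 2).mul_right (1 / (1 - β))).add
          (hsum3.mul_left (1 / 2))).mul_left C₃)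
      · exact (((hsum1.add hsum1').div_const 2).mul_left C₄)
    apply Summable.of_nonneg_of_le
      (fun k => mul_nonneg (hα _) (hu _)) _ hMsum
    intro k
    -- the recursive bound at k+1
    have hrk := hrec (k + 1) (by omega)
    simp only [Nat.add_sub_cancel] at hrk
    -- multiply by α (k+2)
    have hmul : α (k + 2) * u (k + 2)
        ≤ C₂ * (α (k + 2) * β ^ k)
          + C₃ * (α (k + 2) * ∑ l ∈ Finset.Ico 1 (k + 1), β ^ (k - l) * α l)
          + C₄ * (α (k + 2) * α (k + 1)) := by
      have := mul_le_mul_of_nonneg_left hrk (hα (k + 2))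
      calc α (k + 2) * u (k + 2)
          ≤ α (k + 2) * (C₂ * β ^ k
              + C₃ * ∑ l ∈ Finset.Ico 1 (k + 1), β ^ (k - l) * α l
              + C₄ * α (k + 1)) := this
        _ = C₂ * (α (k + 2) * β ^ k)
            + C₃ * (α (k + 2) * ∑ l ∈ Finset.Ico 1 (k + 1), β ^ (k - l) * α l)
            + C₄ * (α (k + 2) * α (k + 1)) := by ring
    -- bound each term
    have hb1 : α (k + 2) * β ^ k ≤ (α (k + 2) ^ 2 + (β ^ 2) ^ k) / 2 := by
      have h : (β ^ 2) ^ k = (β ^ k) ^ 2 := by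
        rw [← pow_mul, ← pow_mul, Nat.mul_comm]
      rw [h]
      nlinarith [sq_nonneg (α (k + 2) - β ^ k)]
    have hb3 : α (k + 2) * α (k + 1) ≤ (α (k + 2) ^ 2 + α (k + 1) ^ 2) / 2 := by
      nlinarith [sq_nonneg (α (k + 2) - α (k + 1))]
    have hb2 : α (k + 2) * ∑ l ∈ Finset.Ico 1 (k + 1), β ^ (k - l) * α l
        ≤ α (k + 2) ^ 2 / 2 * (1 / (1 - β))
          + (1 / 2) * ∑ l ∈ Finset.range (k + 1), (α l) ^ 2 * β ^ (k - l) := by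
      rw [Finset.mul_sum]
      have step1 : ∑ l ∈ Finset.Ico 1 (k + 1), α (k + 2) * (β ^ (k - l) * α l)
          ≤ ∑ l ∈ Finset.Ico 1 (k + 1),
            (α (k + 2) ^ 2 / 2 * β ^ (k - l) + (1 / 2) * ((α l) ^ 2 * β ^ (k - l))) := by
        apply Finset.sum_le_sum
        intro l _
        have hp : (0:ℝ) ≤ β ^ (k - l) := pow_nonneg hβ0.le _
        nlinarith [mul_nonneg hp (sq_nonneg (α (k + 2) - α l))]
      have step2 : ∑ l ∈ Finset.Ico 1 (k + 1),
            (α (k + 2) ^ 2 / 2 * β ^ (k - l) + (1 / 2) * ((α l) ^ 2 * β ^ (k - l)))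
          = α (k + 2) ^ 2 / 2 * (∑ l ∈ Finset.Ico 1 (k + 1), β ^ (k - l))
            + (1 / 2) * ∑ l ∈ Finset.Ico 1 (k + 1), (α l) ^ 2 * β ^ (k - l) := by
        rw [Finset.sum_add_distrib, Finset.mul_sum, Finset.mul_sum]
      have step3 : ∑ l ∈ Finset.Ico 1 (k + 1), β ^ (k - l) ≤ 1 / (1 - β) := by
        have := geo_bound hβ0.le hβ1 1 (k + 1)
        simpa [Nat.add_sub_cancel] using this
      have step4 : ∑ l ∈ Finset.Ico 1 (k + 1), (α l) ^ 2 * β ^ (k - l)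
          ≤ ∑ l ∈ Finset.range (k + 1), (α l) ^ 2 * β ^ (k - l) := by
        apply Finset.sum_le_sum_of_subset_of_nonneg
        · intro x hx
          simp only [Finset.mem_Ico] at hx
          simp only [Finset.mem_range]
          omega
        · intro l _ _
          exact mul_nonneg (sq_nonneg _) (pow_nonneg hβ0.le _)
      calc ∑ l ∈ Finset.Ico 1 (k + 1), α (k + 2) * (β ^ (k - l) * α l)
          ≤ α (k + 2) ^ 2 / 2 * (∑ l ∈ Finset.Ico 1 (k + 1), β ^ (k - l))
            + (1 / 2) * ∑ l ∈ Finset.Ico 1 (k + 1), (α l) ^ 2 * β ^ (k - l) := by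
            rw [← step2]; exact step1
        _ ≤ α (k + 2) ^ 2 / 2 * (1 / (1 - β))
            + (1 / 2) * ∑ l ∈ Finset.range (k + 1), (α l) ^ 2 * β ^ (k - l) := by
            have h' : 0 ≤ α (k + 2) ^ 2 / 2 := by positivity
            gcongr
    calc α (k + 2) * u (k + 2)
        ≤ C₂ * (α (k + 2) * β ^ k)
          + C₃ * (α (k + 2) * ∑ l ∈ Finset.Ico 1 (k + 1), β ^ (k - l) * α l)
          + C₄ * (α (k + 2) * α (k + 1)) := hmul
      _ ≤ M k := by
          rw [hMdef]
          dsimp only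
          gcongr
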